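/- Let φ = (φ_{s,t})_{s≤t} be a measurable stochastic coalescing flow on a locally compact separable metric space M whose two-point motion (X_t,Y_t) satisfies: for every x and t > 0, P^{(2)}_{(x,y)}[X_t ≠ Y_t] → 0 as y → x. Fix s < t, x ∈ M, a Radon measure λ, and let m_ε^x = λ({y ∈ B(x,ε) : φ_{s,t}(y) = φ_{s,t}(x)}). Choose ε_n^x > 0 so that d(x,y) ≤ ε_n^x implies P^{(2)}_{(x,y)}[X_{t−s} ≠ Y_{t−s}] ≤ 2^{-n}. Then: (i) for every α ∈ (0,1), P[m_{ε_n^x}^x < (1−α) λ(B(x,ε_n^x))] ≤ 1/(α 2ⁿ); (ii) almost surely m_{ε_n^x}^x / λ(B(x,ε_n^x)) → 1 as n → ∞; consequently for every x, λ-a.e. x and a.s., the image measure μ_{s,t} = (φ_{s,t})_* λ has an atom at φ_{s,t}(x), so μ_{s,t} is purely atomic a.s. -/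

import Mathlib

open MeasureTheory Filter Topology Metric
open scoped ENNReal NNReal

section Aux

variable {M : Type*} [MetricSpace M] [SecondCountableTopology M]
    [MeasurableSpace M] [BorelSpace M]
    {Ω : Type*} [MeasurableSpace Ω] {P : Measure Ω} [IsProbabilityMeasure P]
    {φ : M → Ω → M} {lam : Measure M} [SFinite lam]

lemma aux_sec_eq {α β : Type*} [MeasurableSpace α] [MeasurableSpace β]
    (ν : Measure β) {A : Set (α × β)} (hA : MeasurableSet A) (a : α) :
    ν {b | (a, b) ∈ A} = ∫⁻ b, A.indicator 1 (a, b) ∂ν := by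
  have h1 : {b | (a, b) ∈ A} = Prod.mk a ⁻¹' A := rfl
  rw [h1, ← lintegral_indicator_one (measurable_prodMk_left hA)]
  exact lintegral_congr fun b => rfl

lemma aux_sec_meas {α β : Type*} [MeasurableSpace α] [MeasurableSpace β]
    (ν : Measure β) [SFinite ν] {A : Set (α × β)} (hA : MeasurableSet A) :
    Measurable fun a => ν {b | (a, b) ∈ A} := by
  have h := (measurable_one.indicator hA : Measurable (A.indicator 1)).lintegral_prod_right'
    (ν := ν)
  have h2 : (fun a => ν {b | (a, b) ∈ A}) = fun a => ∫⁻ b, A.indicator 1 (a, b) ∂ν :=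
    funext fun a => aux_sec_eq ν hA a
  rw [h2]; exact h

lemma aux_eqset_meas (hmeas : Measurable fun p : M × Ω => φ p.1 p.2) (z : M) :
    MeasurableSet {p : Ω × M | φ p.2 p.1 = φ z p.1} := by
  have h1 : Measurable fun p : Ω × M => φ p.2 p.1 := hmeas.comp measurable_swap
  have h2 : Measurable fun p : Ω × M => φ z p.1 :=
    hmeas.comp (measurable_const.prodMk measurable_fst)
  exact h1.stronglyMeasurable.measurableSet_eq_fun h2.stronglyMeasurable

lemma aux_Ebound (hmeas : Measurable fun p : M × Ω => φ p.1 p.2) (z : M) (r : ℝ)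
    (δ : ℝ≥0∞) (hb : ∀ y, dist z y ≤ r → P {ω | φ y ω ≠ φ z ω} ≤ δ) :
    ∫⁻ ω, lam {y | y ∈ closedBall z r ∧ φ y ω ≠ φ z ω} ∂P ≤ δ * lam (closedBall z r) := by
  set A : Set (Ω × M) := {p | p.2 ∈ closedBall z r ∧ φ p.2 p.1 ≠ φ z p.1} with hA_def
  have hA : MeasurableSet A :=
    (measurable_snd measurableSet_closedBall).inter (aux_eqset_meas hmeas z).compl
  have hrw : ∀ ω, lam {y | y ∈ closedBall z r ∧ φ y ω ≠ φ z ω}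
      = ∫⁻ y, A.indicator 1 (ω, y) ∂lam := fun ω => aux_sec_eq lam hA ω
  calc ∫⁻ ω, lam {y | y ∈ closedBall z r ∧ φ y ω ≠ φ z ω} ∂P
      = ∫⁻ ω, ∫⁻ y, A.indicator 1 (ω, y) ∂lam ∂P := lintegral_congr hrw
    _ = ∫⁻ y, ∫⁻ ω, A.indicator 1 (ω, y) ∂P ∂lam :=
        lintegral_lintegral_swap (measurable_one.indicator hA).aemeasurable
    _ ≤ ∫⁻ y, (closedBall z r).indicator (fun _ => δ) y ∂lam := by
        refine lintegral_mono fun y => ?_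
        by_cases hy : y ∈ closedBall z r
        · have hset : MeasurableSet {ω | φ y ω ≠ φ z ω} := by
            have h1 : Measurable fun ω => φ y ω :=
              hmeas.comp (measurable_const.prodMk measurable_id)
            have h2 : Measurable fun ω => φ z ω :=
              hmeas.comp (measurable_const.prodMk measurable_id)
            exact (h1.stronglyMeasurable.measurableSet_eq_fun h2.stronglyMeasurable).compl
          have : ∀ ω, A.indicator (1 : Ω × M → ℝ≥0∞) (ω, y)
              = ({ω | φ y ω ≠ φ z ω} : Set Ω).indicator (1 : Ω → ℝ≥0∞) ω := by
            intro ω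
            by_cases h : φ y ω = φ z ω
            · have h1 : (ω, y) ∉ A := fun hc => hc.2 h
              have h2 : ω ∉ {ω | φ y ω ≠ φ z ω} := fun hc => hc h
              rw [Set.indicator_of_notMem h1, Set.indicator_of_notMem h2]
            · have h1 : (ω, y) ∈ A := ⟨hy, h⟩
              have h2 : ω ∈ {ω | φ y ω ≠ φ z ω} := h
              rw [Set.indicator_of_mem h1, Set.indicator_of_mem h2]; rfl
          rw [lintegral_congr this, lintegral_indicator_one hset,
            Set.indicator_of_mem hy]
          exact hb y (mem_closedBall'.mp hy)
        · have : ∀ ω : Ω, A.indicator (1 : Ω × M → ℝ≥0∞) (ω, y) = 0 := fun ω =>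
            Set.indicator_of_notMem (fun h => hy h.1) _
          rw [lintegral_congr this, lintegral_zero, Set.indicator_of_notMem hy]
    _ = δ * lam (closedBall z r) := lintegral_indicator_const measurableSet_closedBall δ

lemma aux_key (hmeas : Measurable fun p : M × Ω => φ p.1 p.2) (z : M) (r : ℝ)
    (δ a b : ℝ≥0∞) (hL : lam (closedBall z r) ≠ ⊤)
    (hb : ∀ y, dist z y ≤ r → P {ω | φ y ω ≠ φ z ω} ≤ δ)
    (ha0 : a ≠ 0) (haT : a ≠ ⊤) (hab : a + b ≤ 1) :
    P {ω | lam {y | y ∈ closedBall z r ∧ φ y ω = φ z ω} < b * lam (closedBall z r)}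
      ≤ δ / a := by
  set L := lam (closedBall z r) with hLdef
  set A : Set (Ω × M) := {p | p.2 ∈ closedBall z r ∧ φ p.2 p.1 ≠ φ z p.1} with hA_def
  have hA : MeasurableSet A :=
    (measurable_snd measurableSet_closedBall).inter (aux_eqset_meas hmeas z).compl
  have hbad_meas : Measurable fun ω => lam {y | y ∈ closedBall z r ∧ φ y ω ≠ φ z ω} :=
    aux_sec_meas lam hA
  rcases eq_or_ne L 0 with h0 | h0
  · have : {ω | lam {y | y ∈ closedBall z r ∧ φ y ω = φ z ω} < b * L} = ∅ := by
      ext ω; simp [h0]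
    rw [this]; simp
  · have hsub : {ω | lam {y | y ∈ closedBall z r ∧ φ y ω = φ z ω} < b * L}
        ⊆ {ω | a * L ≤ lam {y | y ∈ closedBall z r ∧ φ y ω ≠ φ z ω}} := by
      intro ω hω
      by_contra hcon
      rw [Set.mem_setOf_eq, not_le] at hcon
      rw [Set.mem_setOf_eq] at hω
      have hmeasy : Measurable fun y => φ y ω :=
        hmeas.comp (measurable_id.prodMk measurable_const)
      have hMS : MeasurableSet {y | y ∈ closedBall z r ∧ φ y ω ≠ φ z ω} :=
        measurableSet_closedBall.inter
          ((hmeasy.stronglyMeasurable.measurableSet_eq_fun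
            stronglyMeasurable_const).compl)
      have hdisj : Disjoint {y | y ∈ closedBall z r ∧ φ y ω = φ z ω}
          {y | y ∈ closedBall z r ∧ φ y ω ≠ φ z ω} := by
        rw [Set.disjoint_left]; rintro y ⟨-, h⟩ ⟨-, h'⟩; exact h' h
      have hunion : {y | y ∈ closedBall z r ∧ φ y ω = φ z ω}
          ∪ {y | y ∈ closedBall z r ∧ φ y ω ≠ φ z ω} = closedBall z r := by
        ext y; by_cases h : φ y ω = φ z ω <;> simp [h]
      have hsum : lam {y | y ∈ closedBall z r ∧ φ y ω = φ z ω}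
          + lam {y | y ∈ closedBall z r ∧ φ y ω ≠ φ z ω} = L := by
        rw [← measure_union hdisj hMS, hunion]
      have hlt : L < b * L + a * L := by
        have h := ENNReal.add_lt_add hω hcon
        rwa [hsum] at h
      have : b * L + a * L ≤ L := by
        rw [← add_mul]
        calc (b + a) * L ≤ 1 * L := by
              exact mul_le_mul_left (by rwa [add_comm]) L
          _ = L := one_mul L
      exact absurd (hlt.trans_le this) (lt_irrefl L)
    calc P {ω | lam {y | y ∈ closedBall z r ∧ φ y ω = φ z ω} < b * L}
        ≤ P {ω | a * L ≤ lam {y | y ∈ closedBall z r ∧ φ y ω ≠ φ z ω}} :=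
          measure_mono hsub
      _ ≤ (∫⁻ ω, lam {y | y ∈ closedBall z r ∧ φ y ω ≠ φ z ω} ∂P) / (a * L) := by
          rw [ENNReal.le_div_iff_mul_le (Or.inl (mul_ne_zero ha0 h0))
            (Or.inl (ENNReal.mul_ne_top haT hL)), mul_comm]
          exact mul_meas_ge_le_lintegral₀ hbad_meas.aemeasurable (a * L)
      _ ≤ (δ * L) / (a * L) :=
          ENNReal.div_le_div_right (aux_Ebound hmeas z r δ hb) _
      _ = δ / a := ENNReal.mul_div_mul_right δ a h0 hL

end Aux

lemma aux_halfpow (n : ℕ) : ((1:ℝ≥0∞)/2)^n = ENNReal.ofReal ((1/2:ℝ)^n) := by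
  rw [ENNReal.ofReal_pow (by norm_num)]
  congr 1
  rw [ENNReal.ofReal_div_of_pos (by norm_num)]
  norm_num


/-- Proposition 4.1/Lemmas 4.1–4.2: let `φ = φ_{s,t}` be (a fixed time-slice of) a
stochastic coalescing flow on a locally compact separable metric space whose two-point
motion satisfies `P[φ(x) ≠ φ(y)] → 0` as `y → x`, and let `lam` be a Radon measure.
Fix `x` and radii `ε n` with `P[φ(y) ≠ φ(x)] ≤ 2⁻ⁿ` for `d(x,y) ≤ ε n`, and let
`m_{ε n}^x = lam{y ∈ B(x, ε n) : φ(y) = φ(x)}`.  Then: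
(i) `P[m_{ε n}^x < (1−α) lam(B(x, ε n))] ≤ 1/(α 2ⁿ)` for `α ∈ (0,1)`;
(ii) if the balls have positive mass, a.s. `m_{ε n}^x / lam(B(x, ε n)) → 1`;
(iii) consequently the image measure `μ = φ_* lam` is a.s. purely atomic:
a.s., for `μ`-a.e. `y`, `μ({y}) > 0`. -/
theorem stmt11 {M : Type*} [MetricSpace M] [SecondCountableTopology M]
    [LocallyCompactSpace M] [MeasurableSpace M] [BorelSpace M]
    {Ω : Type*} [MeasurableSpace Ω] (P : Measure Ω) [IsProbabilityMeasure P]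
    (φ : M → Ω → M)
    (hmeas : Measurable fun p : M × Ω => φ p.1 p.2)
    (lam : Measure M) [IsFiniteMeasureOnCompacts lam]
    (htend : ∀ x : M, Tendsto (fun y => P {ω | φ y ω ≠ φ x ω}) (nhds x) (nhds 0))
    (x : M) (ε : ℕ → ℝ) (hεpos : ∀ n, 0 < ε n)
    (hε : ∀ (n : ℕ) (y : M), dist x y ≤ ε n →
      P {ω | φ y ω ≠ φ x ω} ≤ (1 / 2 : ENNReal) ^ n)
    (hfin : ∀ n, lam (closedBall x (ε n)) < ⊤) :
    -- (i)
    (∀ α : ℝ, 0 < α → α < 1 → ∀ n : ℕ,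
      P {ω | lam {y | y ∈ closedBall x (ε n) ∧ φ y ω = φ x ω}
          < ENNReal.ofReal (1 - α) * lam (closedBall x (ε n))}
        ≤ ENNReal.ofReal (1 / (α * 2 ^ n))) ∧
    -- (ii)
    ((∀ n, 0 < lam (closedBall x (ε n))) →
      ∀ᵐ ω ∂P, Tendsto (fun n : ℕ =>
          (lam {y | y ∈ closedBall x (ε n) ∧ φ y ω = φ x ω}).toReal
            / (lam (closedBall x (ε n))).toReal) atTop (nhds 1)) ∧
    -- (iii)
    (∀ᵐ ω ∂P, ∀ᵐ y ∂ (lam.map fun z => φ z ω),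
      0 < (lam.map fun z => φ z ω) {y}) := by
  haveI : SigmaFinite lam := inferInstance
  -- Part (i)
  have parti : ∀ α : ℝ, 0 < α → α < 1 → ∀ n : ℕ,
      P {ω | lam {y | y ∈ closedBall x (ε n) ∧ φ y ω = φ x ω}
          < ENNReal.ofReal (1 - α) * lam (closedBall x (ε n))}
        ≤ ENNReal.ofReal (1 / (α * 2 ^ n)) := by
    intro α hα0 hα1 n
    have hab : ENNReal.ofReal α + ENNReal.ofReal (1 - α) = 1 := by
      rw [← ENNReal.ofReal_add hα0.le (by linarith)]
      have : α + (1 - α) = 1 := by ring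
      rw [this, ENNReal.ofReal_one]
    have hkey := aux_key hmeas x (ε n) ((1/2 : ℝ≥0∞)^n) (ENNReal.ofReal α)
      (ENNReal.ofReal (1 - α)) (hfin n).ne (hε n)
      (ENNReal.ofReal_pos.mpr hα0).ne' ENNReal.ofReal_ne_top hab.le
    refine hkey.trans (le_of_eq ?_)
    rw [aux_halfpow, ← ENNReal.ofReal_div_of_pos hα0]
    congr 1
    rw [div_pow, one_pow]
    field_simp
  refine ⟨parti, ?_, ?_⟩
  -- Part (ii)
  · intro hpos
    have hae : ∀ k : ℕ, ∀ᵐ ω ∂P, ∀ᶠ n in atTop,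
        ω ∉ {ω | lam {y | y ∈ closedBall x (ε n) ∧ φ y ω = φ x ω}
          < ENNReal.ofReal (1 - 1/((k:ℝ)+2)) * lam (closedBall x (ε n))} := by
      intro k
      apply ae_eventually_notMem
      have hk2 : (0:ℝ) < (k:ℝ) + 2 := by positivity
      have hbound : ∀ n : ℕ,
          P {ω | lam {y | y ∈ closedBall x (ε n) ∧ φ y ω = φ x ω}
            < ENNReal.ofReal (1 - 1/((k:ℝ)+2)) * lam (closedBall x (ε n))}
          ≤ ENNReal.ofReal ((k:ℝ)+2) * (1/2:ℝ≥0∞)^n := by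
        intro n
        refine (parti (1/((k:ℝ)+2)) (by positivity)
          (by rw [div_lt_one hk2]; linarith) n).trans (le_of_eq ?_)
        rw [aux_halfpow, ← ENNReal.ofReal_mul (by positivity)]
        congr 1
        rw [div_pow, one_pow]
        field_simp
      have hsum := ENNReal.tsum_le_tsum hbound
      rw [ENNReal.tsum_mul_left, ENNReal.tsum_geometric] at hsum
      refine ne_top_of_le_ne_top ?_ hsum
      refine ENNReal.mul_ne_top ENNReal.ofReal_ne_top (ENNReal.inv_ne_top.mpr ?_)
      norm_num
    have hae2 := ae_all_iff.mpr hae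
    filter_upwards [hae2] with ω hω
    rw [Metric.tendsto_atTop]
    intro δ hδ
    obtain ⟨k, hk⟩ : ∃ k : ℕ, 1/((k:ℝ)+2) < δ := by
      obtain ⟨k, hk⟩ := exists_nat_gt (1/δ)
      have hk2 : (0:ℝ) < (k:ℝ) + 2 := by positivity
      have h2 : 1/δ < (k:ℝ)+2 := by linarith
      refine ⟨k, ?_⟩
      calc 1/((k:ℝ)+2) < 1/(1/δ) := one_div_lt_one_div_of_lt (by positivity) h2
        _ = δ := one_div_one_div δ
    obtain ⟨N, hN⟩ := eventually_atTop.mp (hω k)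
    refine ⟨N, fun n hn => ?_⟩
    have hk2 : (0:ℝ) < (k:ℝ)+2 := by positivity
    have hα1 : 1/((k:ℝ)+2) ≤ 1 := by rw [div_le_one hk2]; linarith
    have h1 : ENNReal.ofReal (1 - 1/((k:ℝ)+2)) * lam (closedBall x (ε n))
        ≤ lam {y | y ∈ closedBall x (ε n) ∧ φ y ω = φ x ω} := not_lt.mp (hN n hn)
    have hLn_ne : lam (closedBall x (ε n)) ≠ ⊤ := (hfin n).ne
    have hm_le : lam {y | y ∈ closedBall x (ε n) ∧ φ y ω = φ x ω}
        ≤ lam (closedBall x (ε n)) := measure_mono fun y hy => hy.1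
    have hm_ne : lam {y | y ∈ closedBall x (ε n) ∧ φ y ω = φ x ω} ≠ ⊤ :=
      (hm_le.trans_lt (hfin n)).ne
    have hLpos : 0 < (lam (closedBall x (ε n))).toReal :=
      ENNReal.toReal_pos (hpos n).ne' hLn_ne
    have hup : (lam {y | y ∈ closedBall x (ε n) ∧ φ y ω = φ x ω}).toReal
        ≤ (lam (closedBall x (ε n))).toReal := ENNReal.toReal_mono hLn_ne hm_le
    have hlow : (1 - 1/((k:ℝ)+2)) * (lam (closedBall x (ε n))).toReal
        ≤ (lam {y | y ∈ closedBall x (ε n) ∧ φ y ω = φ x ω}).toReal := by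
      have h2 := ENNReal.toReal_mono hm_ne h1
      rwa [ENNReal.toReal_mul, ENNReal.toReal_ofReal (by linarith)] at h2
    have hr_le : (lam {y | y ∈ closedBall x (ε n) ∧ φ y ω = φ x ω}).toReal
        / (lam (closedBall x (ε n))).toReal ≤ 1 := by
      rw [div_le_one hLpos]; exact hup
    have hr_ge : 1 - 1/((k:ℝ)+2) ≤ (lam {y | y ∈ closedBall x (ε n) ∧ φ y ω = φ x ω}).toReal
        / (lam (closedBall x (ε n))).toReal := by
      rw [le_div_iff₀ hLpos]; exact hlow
    rw [Real.dist_eq, abs_of_nonpos (by linarith)]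
    linarith
  -- Part (iii)
  · have hstep : ∀ᵐ z ∂lam, ∀ᵐ ω ∂P, 0 < lam {w | φ w ω = φ z ω} := by
      have hNnull : lam {z : M | ∃ r, 0 < r ∧ lam (ball z r) = 0} = 0 := by
        obtain ⟨B, hBc, -, hBb⟩ := TopologicalSpace.exists_countable_basis M
        have hsub : {z : M | ∃ r, 0 < r ∧ lam (ball z r) = 0}
            ⊆ ⋃ u ∈ {u ∈ B | lam u = 0}, u := by
          rintro z ⟨r, hr, hr0⟩
          obtain ⟨u, huB, hzu, husub⟩ :=
            hBb.exists_subset_of_mem_open (mem_ball_self hr) isOpen_ball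
          exact Set.mem_biUnion ⟨huB, measure_mono_null husub hr0⟩ hzu
        refine measure_mono_null hsub ?_
        rw [measure_biUnion_null_iff (hBc.mono (Set.sep_subset _ _))]
        exact fun u hu => hu.2
      have hz_ae : ∀ᵐ z ∂lam, ¬ ∃ r, 0 < r ∧ lam (ball z r) = 0 :=
        measure_eq_zero_iff_ae_notMem.mp hNnull
      filter_upwards [hz_ae] with z hz
      push_neg at hz
      obtain ⟨r0, hr0pos, hr0cpt⟩ := exists_isCompact_closedBall z
      have hsel : ∀ n : ℕ, ∃ ρ, 0 < ρ ∧ ρ ≤ r0 ∧ ∀ y, dist z y ≤ ρ →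
          P {ω | φ y ω ≠ φ z ω} ≤ (1/2 : ℝ≥0∞)^n := by
        intro n
        have hev : ∀ᶠ y in nhds z, P {ω | φ y ω ≠ φ z ω} < (1/2:ℝ≥0∞)^n :=
          (htend z).eventually_lt_const (ENNReal.pow_pos (by norm_num) n)
        obtain ⟨δ', hδ'pos, hδ'⟩ := Metric.eventually_nhds_iff.mp hev
        refine ⟨min (δ'/2) r0, by positivity, min_le_right _ _, fun y hy => ?_⟩
        have hlt : dist y z < δ' := by
          rw [dist_comm]
          calc dist z y ≤ min (δ'/2) r0 := hy
            _ ≤ δ'/2 := min_le_left _ _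
            _ < δ' := by linarith
        exact (hδ' hlt).le
      choose ρ hρpos hρle hρbound using hsel
      have hE : ∀ n : ℕ, P {ω | lam {w | φ w ω = φ z ω} = 0} ≤ (1/2:ℝ≥0∞)^n * 2 := by
        intro n
        have hLfin : lam (closedBall z (ρ n)) ≠ ⊤ :=
          ((measure_mono (closedBall_subset_closedBall (hρle n))).trans_lt
            hr0cpt.measure_lt_top).ne
        have hLpos : lam (closedBall z (ρ n)) ≠ 0 := fun h =>
          hz (ρ n) (hρpos n) (measure_mono_null ball_subset_closedBall h)
        have hkey := aux_key hmeas z (ρ n) ((1/2:ℝ≥0∞)^n) (1/2) (1/2) hLfin (hρbound n)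
          (by norm_num) (by norm_num) (ENNReal.add_halves 1).le
        refine le_trans (measure_mono fun ω hω => ?_) (hkey.trans (le_of_eq ?_))
        · have hm0 : lam {y | y ∈ closedBall z (ρ n) ∧ φ y ω = φ z ω} = 0 :=
            measure_mono_null (fun y hy => hy.2) hω
          show lam {y | y ∈ closedBall z (ρ n) ∧ φ y ω = φ z ω}
            < 1/2 * lam (closedBall z (ρ n))
          rw [hm0]
          exact ENNReal.mul_pos (by norm_num) hLpos
        · rw [div_eq_mul_inv]
          congr 1
          norm_num
      have h0 : P {ω | lam {w | φ w ω = φ z ω} = 0} = 0 := by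
        have h1 := ENNReal.tendsto_pow_atTop_nhds_zero_of_lt_one
          (by norm_num : (1/2:ℝ≥0∞) < 1)
        have htd : Tendsto (fun n : ℕ => (1/2:ℝ≥0∞)^n * 2) atTop (nhds 0) := by
          have h2 := ENNReal.Tendsto.mul_const (b := 2) h1 (Or.inr (by norm_num))
          simpa using h2
        exact le_antisymm (ge_of_tendsto' htd hE) zero_le
      have heq : {ω | ¬ 0 < lam {w | φ w ω = φ z ω}}
          = {ω | lam {w | φ w ω = φ z ω} = 0} := by
        ext ω; simp [pos_iff_ne_zero]
      rw [ae_iff, heq]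
      exact h0
    have hprod_meas : MeasurableSet {q : M × Ω | 0 < lam {w | φ w q.2 = φ q.1 q.2}} := by
      have hA : MeasurableSet {p : (M × Ω) × M | φ p.2 p.1.2 = φ p.1.1 p.1.2} := by
        have h1 : Measurable fun p : (M × Ω) × M => φ p.2 p.1.2 :=
          hmeas.comp (measurable_snd.prodMk (measurable_snd.comp measurable_fst))
        have h2 : Measurable fun p : (M × Ω) × M => φ p.1.1 p.1.2 :=
          hmeas.comp ((measurable_fst.comp measurable_fst).prodMk
            (measurable_snd.comp measurable_fst))
        exact h1.stronglyMeasurable.measurableSet_eq_fun h2.stronglyMeasurable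
      exact measurableSet_lt measurable_const (aux_sec_meas lam hA)
    have hswap := (Measure.ae_ae_comm hprod_meas).mp hstep
    filter_upwards [hswap] with ω hω
    have hfω : Measurable fun w : M => φ w ω :=
      hmeas.comp (measurable_id.prodMk measurable_const)
    have hGmeas : Measurable fun y : M => lam {w | φ w ω = y} := by
      have hA : MeasurableSet {q : M × M | φ q.2 ω = q.1} := by
        have h1 : Measurable fun q : M × M => φ q.2 ω := hfω.comp measurable_snd
        exact h1.stronglyMeasurable.measurableSet_eq_fun measurable_fst.stronglyMeasurable
      exact aux_sec_meas lam hA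
    have hmapsing : ∀ y : M, (lam.map fun w => φ w ω) {y} = lam {w | φ w ω = y} :=
      fun y => by rw [Measure.map_apply hfω (measurableSet_singleton y)]; rfl
    have hset : MeasurableSet {y : M | 0 < lam {w | φ w ω = y}} :=
      measurableSet_lt measurable_const hGmeas
    have hmain : ∀ᵐ y ∂(lam.map fun w => φ w ω), 0 < lam {w | φ w ω = y} := by
      rw [ae_map_iff hfω.aemeasurable hset]
      exact hω
    filter_upwards [hmain] with y hy
    rw [hmapsing y]
    exact hy
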